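/- Let ℓ ≥ 2, let j be odd with 1 ≤ j ≤ ℓ, and let w = (w₁, w₂, …, w_{2ℓ}) ∈ 𝔽₄^{2ℓ} with w₂ ≠ 0. If χ_w(O₀) = −1 + 4^{ℓ−1}, then χ_w(Z_{ℓ,j} \ O₀) = 0. -/
import Mathlib


/-- The quadratic form `Q_{ℓ,j}(x₁,…,x_{2ℓ}) = Σ_{i=1}^{j} (α x_{2i-1}² + x_{2i-1}x_{2i} + x_{2i}²)
+ Σ_{i=j+1}^{ℓ} x_{2i-1}x_{2i}`  (coordinates are 0-indexed in Lean). -/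
def Qform {F4 : Type*} [Field F4] (α : F4) (ℓ j : ℕ) (x : Fin (2 * ℓ) → F4) : F4 :=
  ∑ i : Fin ℓ,
    (let a := x ⟨2 * i.val, by have := i.isLt; omega⟩
     let b := x ⟨2 * i.val + 1, by have := i.isLt; omega⟩
     if i.val < j then α * a ^ 2 + a * b + b ^ 2 else a * b)

open scoped Classical in
/-- The value `(-1)^{tr(t)} ∈ ℂ`, where `tr : 𝔽₄ → 𝔽₂`, `tr(t) = t + t²`, is the trace map. -/
noncomputable def chi4 {F4 : Type*} [Field F4] (t : F4) : ℂ :=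
  if t + t ^ 2 = 0 then 1 else -1

/-- The character sum `χ_w(S) = Σ_{v ∈ S} (-1)^{tr(Σ_i w_i v_i)}`. -/
noncomputable def chiSum {F4 : Type*} [Field F4] {m : ℕ} (w : Fin m → F4)
    (S : Set (Fin m → F4)) : ℂ :=
  ∑ᶠ v ∈ S, chi4 (∑ i, w i * v i)

open Finset
open scoped Classical

section Basics
set_option linter.unusedSectionVars false
variable {F4 : Type*} [Field F4] [Fintype F4]

lemma my_two (hc : Fintype.card F4 = 4) : (2:F4) = 0 := by
  have h := FiniteField.cast_card_eq_zero F4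
  rw [hc] at h; push_cast at h
  have h4 : (4:F4) = 2*2 := by norm_num
  rw [h4] at h
  rcases mul_eq_zero.mp h with h|h <;> exact h

lemma my_oneone (hc : Fintype.card F4 = 4) : (1:F4) + 1 = 0 := by
  linear_combination my_two hc

lemma alpha_ne_zero {α : F4} (hα : α ^ 2 = α + 1) : α ≠ 0 := by
  intro h; rw [h] at hα
  exact (one_ne_zero : (1:F4) ≠ 0) (by linear_combination -hα)

lemma alpha_ne_one (hc : Fintype.card F4 = 4) {α : F4} (hα : α ^ 2 = α + 1) : α ≠ 1 := by
  intro h; rw [h] at hα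
  exact (one_ne_zero : (1:F4) ≠ 0) (by linear_combination -hα)

lemma alpha1_ne_zero (hc : Fintype.card F4 = 4) {α : F4} (hα : α ^ 2 = α + 1) : α + 1 ≠ 0 := by
  intro h
  exact alpha_ne_one hc hα (by linear_combination h - my_oneone hc)

lemma univ_eq (hc : Fintype.card F4 = 4) {α : F4} (hα : α ^ 2 = α + 1) :
    (univ : Finset F4) = {0, 1, α, α+1} := by
  have hα0 := alpha_ne_zero hα
  have hα1 := alpha_ne_one hc hα
  have hαa := alpha1_ne_zero hc hα
  symm
  apply eq_univ_of_card
  rw [hc]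
  rw [show ({0, 1, α, α+1} : Finset F4) = insert 0 (insert 1 (insert α {α+1})) from rfl]
  rw [card_insert_of_notMem ?_, card_insert_of_notMem ?_, card_insert_of_notMem ?_,
      card_singleton]
  · simp only [mem_singleton]
    intro h
    exact (one_ne_zero : (1:F4) ≠ 0) (by linear_combination -h)
  · simp only [mem_insert, mem_singleton]
    push_neg
    exact ⟨fun h => hα1 h.symm, fun h => hα0 (by linear_combination -h)⟩
  · simp only [mem_insert, mem_singleton]
    push_neg
    exact ⟨fun h => (one_ne_zero : (1:F4) ≠ 0) h.symm, fun h => hα0 h.symm,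
           fun h => hαa h.symm⟩
end Basics

section Chars
set_option linter.unusedSectionVars false
variable {F4 : Type*} [Field F4] [Fintype F4]

lemma chi4_zero' : chi4 (0:F4) = 1 := by simp [chi4]

lemma chi4_one (hc : Fintype.card F4 = 4) : chi4 (1:F4) = 1 := by
  unfold chi4
  rw [if_pos (by linear_combination my_two hc)]

lemma chi4_alpha (hc : Fintype.card F4 = 4) {α : F4} (hα : α ^ 2 = α + 1) :
    chi4 α = -1 := by
  unfold chi4
  rw [if_neg]
  intro h
  exact (one_ne_zero : (1:F4) ≠ 0) (by linear_combination h - hα - α * my_two hc)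

lemma chi4_alpha1 (hc : Fintype.card F4 = 4) {α : F4} (hα : α ^ 2 = α + 1) :
    chi4 (α+1) = -1 := by
  unfold chi4
  rw [if_neg]
  intro h
  exact (one_ne_zero : (1:F4) ≠ 0)
    (by linear_combination h - hα - (2*α + 1) * my_two hc)

lemma sum_chi4 (hc : Fintype.card F4 = 4) {α : F4} (hα : α ^ 2 = α + 1) :
    ∑ b : F4, chi4 b = 0 := by
  have hα0 := alpha_ne_zero hα
  have hα1 := alpha_ne_one hc hα
  have hαa := alpha1_ne_zero hc hα
  rw [univ_eq hc hα]
  rw [show ({0, 1, α, α+1} : Finset F4) = insert 0 (insert 1 (insert α {α+1})) from rfl]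
  rw [sum_insert ?_, sum_insert ?_, sum_insert ?_, sum_singleton,
      chi4_zero', chi4_one hc, chi4_alpha hc hα, chi4_alpha1 hc hα]
  · ring
  · simp only [mem_singleton]
    intro h
    exact (one_ne_zero : (1:F4) ≠ 0) (by linear_combination -h)
  · simp only [mem_insert, mem_singleton]
    push_neg
    exact ⟨fun h => hα1 h.symm, fun h => hα0 (by linear_combination -h)⟩
  · simp only [mem_insert, mem_singleton]
    push_neg
    exact ⟨fun h => (one_ne_zero : (1:F4) ≠ 0) h.symm, fun h => hα0 h.symm,
           fun h => hαa h.symm⟩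

lemma sum_chi4_mul (hc : Fintype.card F4 = 4) {α : F4} (hα : α ^ 2 = α + 1) (s : F4) :
    ∑ b : F4, chi4 (s * b) = if s = 0 then 4 else 0 := by
  by_cases hs : s = 0
  · simp [hs, chi4_zero', hc]
  · rw [if_neg hs, ← sum_chi4 hc hα]
    exact Fintype.sum_bijective (s * ·) (mulLeft_bijective₀ s hs) _ _ (fun b => rfl)
end Chars

section More
set_option linter.unusedSectionVars false
variable {F4 : Type*} [Field F4] [Fintype F4]

lemma my_pow4 (hc : Fintype.card F4 = 4) (x : F4) : x^4 = x := by
  have := FiniteField.pow_card x; rwa [hc] at this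

lemma my_cube (hc : Fintype.card F4 = 4) {x : F4} (hx : x ≠ 0) : x^3 = 1 := by
  have := FiniteField.pow_card_sub_one_eq_one x hx; rwa [hc] at this

lemma my_sq_add (hc : Fintype.card F4 = 4) (x y : F4) : (x+y)^2 = x^2 + y^2 := by
  linear_combination x*y*my_two hc

lemma my_tr_cases (hc : Fintype.card F4 = 4) (x : F4) : x + x^2 = 0 ∨ x + x^2 = 1 := by
  have h4 := my_pow4 hc x
  have : (x + x^2) * ((x + x^2) - 1) = 0 := by linear_combination x^3*my_two hc + h4
  rcases mul_eq_zero.mp this with h|h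
  · exact Or.inl h
  · exact Or.inr (by linear_combination h)

lemma chi4_add (hc : Fintype.card F4 = 4) (x y : F4) :
    chi4 (x + y) = chi4 x * chi4 y := by
  have htr : (x+y) + (x+y)^2 = (x + x^2) + (y + y^2) := by
    rw [my_sq_add hc]; ring
  unfold chi4
  rcases my_tr_cases hc x with hx|hx <;> rcases my_tr_cases hc y with hy|hy <;>
      rw [htr, hx, hy] <;>
    simp [my_oneone hc, hx, hy, one_ne_zero]

lemma chi4_sqeq (hc : Fintype.card F4 = 4) (x : F4) : chi4 (x^2) = chi4 x := by
  have h : x^2 + (x^2)^2 = x + x^2 := by linear_combination my_pow4 hc x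
  unfold chi4; rw [h]

lemma chi4_finsum (hc : Fintype.card F4 = 4) {ι : Type*} (s : Finset ι) (f : ι → F4) :
    chi4 (∑ i ∈ s, f i) = ∏ i ∈ s, chi4 (f i) := by
  induction s using Finset.cons_induction with
  | empty => simp [chi4_zero']
  | cons a s ha ih => rw [sum_cons, prod_cons, chi4_add hc, ih]
end More

section Blocks
set_option linter.unusedSectionVars false
variable {F4 : Type*} [Field F4] [Fintype F4]

lemma my_neg (hc : Fintype.card F4 = 4) (x : F4) : -x = x := by
  linear_combination -x * my_two hc

lemma Hblock (hc : Fintype.card F4 = 4) {α : F4} (hα : α ^ 2 = α + 1)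
    {t : F4} (ht : t ≠ 0) (u v : F4) :
    ∑ p : F4 × F4, chi4 (t * (p.1 * p.2) + u * p.1 + v * p.2)
      = 4 * chi4 (u * v * t⁻¹) := by
  rw [Fintype.sum_prod_type]
  have step : ∀ a : F4, ∑ b : F4, chi4 (t * (a * b) + u * a + v * b)
      = chi4 (u * a) * (if t * a + v = 0 then 4 else 0) := by
    intro a
    rw [← sum_chi4_mul hc hα (t*a+v), Finset.mul_sum]
    apply Finset.sum_congr rfl
    intro b _
    rw [← chi4_add hc]
    congr 1; ring
  rw [Finset.sum_congr rfl (fun a _ => step a)]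
  rw [Finset.sum_eq_single (v * t⁻¹)]
  · rw [if_pos (by linear_combination v * mul_inv_cancel₀ ht + v * my_two hc)]
    rw [← mul_assoc, mul_comm]
  · intro a _ ha
    rw [if_neg, mul_zero]
    intro h
    apply ha
    linear_combination t⁻¹ * h - a * inv_mul_cancel₀ ht - t⁻¹ * v * my_two hc
  · intro h; exact absurd (Finset.mem_univ _) h

lemma Eblock (hc : Fintype.card F4 = 4) {α : F4} (hα : α ^ 2 = α + 1)
    {t : F4} (ht : t ≠ 0) (u v : F4) :
    ∑ p : F4 × F4, chi4 (t * (α * p.1 ^ 2 + p.1 * p.2 + p.2 ^ 2) + u * p.1 + v * p.2)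
      = -4 * chi4 ((u ^ 2 + u * v + α * v ^ 2) * t⁻¹) := by
  have ht3 : t ^ 3 = 1 := my_cube hc ht
  have hti : t⁻¹ * t = 1 := inv_mul_cancel₀ ht
  have ht2i : t ^ 2 = t⁻¹ := by
    apply eq_inv_of_mul_eq_one_left
    linear_combination ht3
  rw [Fintype.sum_prod_type]
  have key : ∀ a b : F4, chi4 (t * (α * a ^ 2 + a * b + b ^ 2) + u * a + v * b)
      = chi4 (t * α * a ^ 2 + u * a) * chi4 ((t ^ 2 + t * a + v) * b) := by
    intro a b
    have h2 : chi4 ((t ^ 2 + t * a + v) * b) = chi4 (t * b ^ 2 + (t * a + v) * b) := by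
      rw [show (t ^ 2 + t * a + v) * b = t ^ 2 * b + (t * a + v) * b by ring,
          chi4_add hc, chi4_add hc (t * b ^ 2)]
      congr 1
      conv_lhs => rw [← my_pow4 hc b]
      rw [show t ^ 2 * b ^ 4 = (t * b ^ 2) ^ 2 by ring, chi4_sqeq hc]
    rw [h2, ← chi4_add hc]
    congr 1; ring
  have step : ∀ a : F4, ∑ b : F4, chi4 (t * (α * a ^ 2 + a * b + b ^ 2) + u * a + v * b)
      = chi4 (t * α * a ^ 2 + u * a) * (if t ^ 2 + t * a + v = 0 then 4 else 0) := by
    intro a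
    rw [← sum_chi4_mul hc hα (t ^ 2 + t * a + v), Finset.mul_sum]
    exact Finset.sum_congr rfl (fun b _ => key a b)
  rw [Finset.sum_congr rfl (fun a _ => step a)]
  rw [Finset.sum_eq_single (t + v * t⁻¹)]
  · rw [if_pos (by linear_combination v * hti + (t^2 + v) * my_two hc)]
    have hX : t * α * (t + v * t⁻¹) ^ 2 + u * (t + v * t⁻¹)
        = α + (((u * v + α * v ^ 2) * t⁻¹) + u * t) := by
      linear_combination α * ht3 + (α*v*t^2*t⁻¹) * my_two hc + (α*v^2*t⁻¹) * hti
    rw [hX, chi4_add hc, chi4_add hc, chi4_alpha hc hα]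
    have hut : chi4 (u * t) = chi4 (u ^ 2 * t⁻¹) := by
      rw [← ht2i, show u ^ 2 * t ^ 2 = (u * t) ^ 2 by ring, chi4_sqeq hc]
    rw [hut, ← chi4_add hc]
    rw [show (u * v + α * v ^ 2) * t⁻¹ + u ^ 2 * t⁻¹ = (u ^ 2 + u * v + α * v ^ 2) * t⁻¹ by ring]
    ring
  · intro a _ ha
    rw [if_neg, mul_zero]
    intro h
    apply ha
    linear_combination t⁻¹ * h - (a + t) * hti - (t + t⁻¹ * v) * my_two hc
  · intro h; exact absurd (Finset.mem_univ _) h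
end Blocks

section Pair
variable {M : Type*} [AddCommMonoid M]

lemma sum_range_two_mul (n : ℕ) (f : ℕ → M) :
    ∑ k ∈ range (2 * n), f k = ∑ i ∈ range n, (f (2 * i) + f (2 * i + 1)) := by
  induction n with
  | zero => simp
  | succ n ih =>
      rw [show 2 * (n + 1) = (2 * n + 1) + 1 by ring, sum_range_succ, sum_range_succ,
        ih, sum_range_succ, add_assoc]

lemma fin_sum_pairs {ℓ : ℕ} (g : Fin (2 * ℓ) → M) :
    ∑ k : Fin (2 * ℓ), g k
      = ∑ i : Fin ℓ, (g ⟨2 * i.val, by have := i.isLt; omega⟩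
          + g ⟨2 * i.val + 1, by have := i.isLt; omega⟩) := by
  classical
  set f : ℕ → M := fun k => if h : k < 2 * ℓ then g ⟨k, h⟩ else 0 with hf
  have h1 : ∑ k : Fin (2 * ℓ), g k = ∑ k ∈ range (2 * ℓ), f k := by
    rw [← Fin.sum_univ_eq_sum_range f (2 * ℓ)]
    apply Finset.sum_congr rfl
    intro k _
    simp only [hf]
    rw [dif_pos k.isLt]
  rw [h1, sum_range_two_mul, ← Fin.sum_univ_eq_sum_range (fun i => f (2 * i) + f (2 * i + 1)) ℓ]
  apply Finset.sum_congr rfl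
  intro i _
  have h2 : 2 * i.val < 2 * ℓ := by have := i.isLt; omega
  have h3 : 2 * i.val + 1 < 2 * ℓ := by have := i.isLt; omega
  simp only [hf]
  rw [dif_pos h2, dif_pos h3]
end Pair

section PairFn
variable {F4 : Type*} [Field F4]

def pairFn (F4 : Type*) (ℓ : ℕ) (y : Fin ℓ → F4 × F4) : Fin (2 * ℓ) → F4 := fun k =>
  if h : k.val % 2 = 0 then (y ⟨k.val / 2, by have := k.isLt; omega⟩).1
  else (y ⟨k.val / 2, by have := k.isLt; omega⟩).2

lemma pairFn_even {ℓ : ℕ} (y : Fin ℓ → F4 × F4) (i : Fin ℓ) :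
    pairFn F4 ℓ y ⟨2 * i.val, by have := i.isLt; omega⟩ = (y i).1 := by
  simp only [pairFn]
  rw [dif_pos (by omega : (2 * i.val) % 2 = 0)]
  exact congrArg (fun z => (y z).1) (Fin.ext (by simp only [Fin.val_mk]; omega))

lemma pairFn_odd {ℓ : ℕ} (y : Fin ℓ → F4 × F4) (i : Fin ℓ) :
    pairFn F4 ℓ y ⟨2 * i.val + 1, by have := i.isLt; omega⟩ = (y i).2 := by
  simp only [pairFn]
  rw [dif_neg (by omega : ¬ (2 * i.val + 1) % 2 = 0)]
  exact congrArg (fun z => (y z).2) (Fin.ext (by simp only [Fin.val_mk]; omega))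

lemma pairFn_bijective (ℓ : ℕ) : Function.Bijective (pairFn F4 ℓ) := by
  constructor
  · intro y₁ y₂ h
    funext i
    have h1 := congrFun h ⟨2 * i.val, by have := i.isLt; omega⟩
    have h2 := congrFun h ⟨2 * i.val + 1, by have := i.isLt; omega⟩
    rw [pairFn_even, pairFn_even] at h1
    rw [pairFn_odd, pairFn_odd] at h2
    exact Prod.ext h1 h2
  · intro x
    refine ⟨fun i => (x ⟨2 * i.val, by have := i.isLt; omega⟩,
      x ⟨2 * i.val + 1, by have := i.isLt; omega⟩), ?_⟩
    funext k
    simp only [pairFn]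
    by_cases h : k.val % 2 = 0
    · rw [dif_pos h]
      show x ⟨2 * (k.val / 2), by have := k.isLt; omega⟩ = x k
      exact congrArg x (Fin.ext (by simp only [Fin.val_mk]; omega))
    · rw [dif_neg h]
      show x ⟨2 * (k.val / 2) + 1, by have := k.isLt; omega⟩ = x k
      exact congrArg x (Fin.ext (by simp only [Fin.val_mk]; omega))
end PairFn

section W
set_option linter.unusedSectionVars false
variable {F4 : Type*} [Field F4] [Fintype F4]

noncomputable def Gval (α : F4) (ℓ j : ℕ) (wv : Fin (2 * ℓ) → F4) : F4 :=
  ∑ i : Fin ℓ,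
    (let u := wv ⟨2 * i.val, by have := i.isLt; omega⟩
     let v := wv ⟨2 * i.val + 1, by have := i.isLt; omega⟩
     if i.val < j then u ^ 2 + u * v + α * v ^ 2 else u * v)

lemma card_filter_lt {ℓ j : ℕ} (hjl : j ≤ ℓ) :
    (univ.filter fun i : Fin ℓ => i.val < j).card = j := by
  rcases eq_or_lt_of_le hjl with h | h
  · subst h
    simp [Fin.is_lt]
  · have he : (univ.filter fun i : Fin ℓ => i.val < j) = Finset.Iio ⟨j, h⟩ := by
      ext i
      simp [Fin.lt_def]
    rw [he, Fin.card_Iio]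

lemma Wsum (hc : Fintype.card F4 = 4) {α : F4} (hα : α ^ 2 = α + 1)
    {ℓ j : ℕ} (hjodd : Odd j) (hjl : j ≤ ℓ) {t : F4} (ht : t ≠ 0)
    (wv : Fin (2 * ℓ) → F4) :
    ∑ x : Fin (2 * ℓ) → F4, chi4 (t * Qform α ℓ j x + ∑ k, wv k * x k)
      = -(4 : ℂ) ^ ℓ * chi4 (Gval α ℓ j wv * t⁻¹) := by
  set U : Fin ℓ → F4 := fun i => wv ⟨2 * i.val, by have := i.isLt; omega⟩ with hU
  set V : Fin ℓ → F4 := fun i => wv ⟨2 * i.val + 1, by have := i.isLt; omega⟩ with hV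
  set blockfn : Fin ℓ → F4 × F4 → ℂ := fun i p =>
    chi4 (t * (if i.val < j then α * p.1 ^ 2 + p.1 * p.2 + p.2 ^ 2 else p.1 * p.2)
      + U i * p.1 + V i * p.2) with hbf
  have step1 : ∀ y : Fin ℓ → F4 × F4,
      chi4 (t * Qform α ℓ j (pairFn F4 ℓ y) + ∑ k, wv k * (pairFn F4 ℓ y) k)
        = ∏ i : Fin ℓ, blockfn i (y i) := by
    intro y
    have hQ : Qform α ℓ j (pairFn F4 ℓ y)
        = ∑ i : Fin ℓ, (if i.val < j
            then α * (y i).1 ^ 2 + (y i).1 * (y i).2 + (y i).2 ^ 2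
            else (y i).1 * (y i).2) := by
      unfold Qform
      apply Finset.sum_congr rfl
      intro i _
      simp only [pairFn_even, pairFn_odd]
    have hL : (∑ k, wv k * (pairFn F4 ℓ y) k)
        = ∑ i : Fin ℓ, (U i * (y i).1 + V i * (y i).2) := by
      rw [fin_sum_pairs (fun k => wv k * (pairFn F4 ℓ y) k)]
      apply Finset.sum_congr rfl
      intro i _
      simp only [pairFn_even, pairFn_odd, hU, hV]
    rw [hQ, hL, Finset.mul_sum, ← Finset.sum_add_distrib, chi4_finsum hc]
    apply Finset.prod_congr rfl
    intro i _
    simp only [hbf]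
    congr 1
    ring
  rw [← Function.Bijective.sum_comp (pairFn_bijective ℓ)
      (fun x => chi4 (t * Qform α ℓ j x + ∑ k, wv k * x k))]
  rw [Finset.sum_congr rfl (fun y _ => step1 y)]
  rw [← Fintype.piFinset_univ, ← Finset.prod_univ_sum (fun _ => (univ : Finset (F4 × F4))) blockfn]
  have step2 : ∀ i : Fin ℓ, ∑ p : F4 × F4, blockfn i p
      = (if i.val < j then (-1 : ℂ) else 1) * 4
        * chi4 ((if i.val < j then U i ^ 2 + U i * V i + α * V i ^ 2 else U i * V i) * t⁻¹) := by
    intro i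
    by_cases hij : i.val < j
    · simp only [hbf, hij, if_true]
      rw [Eblock hc hα ht (U i) (V i)]
      ring
    · simp only [hbf, hij, if_false]
      rw [Hblock hc hα ht (U i) (V i)]
      ring
  rw [Finset.prod_congr rfl (fun i _ => step2 i)]
  rw [Finset.prod_mul_distrib, Finset.prod_mul_distrib]
  have hsigns : (∏ i : Fin ℓ, (if i.val < j then (-1 : ℂ) else 1)) = -1 := by
    rw [Finset.prod_ite, Finset.prod_const, Finset.prod_const, card_filter_lt hjl,
      one_pow, mul_one, Odd.neg_one_pow hjodd]
  have hfours : (∏ _i : Fin ℓ, (4 : ℂ)) = 4 ^ ℓ := by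
    rw [Finset.prod_const, Finset.card_univ, Fintype.card_fin]
  have hchis : (∏ i : Fin ℓ, chi4 ((if i.val < j then U i ^ 2 + U i * V i + α * V i ^ 2
      else U i * V i) * t⁻¹)) = chi4 (Gval α ℓ j wv * t⁻¹) := by
    rw [← chi4_finsum hc, ← Finset.sum_mul]
    rfl
  rw [hsigns, hfours, hchis]
  ring
end W

section W0
set_option linter.unusedSectionVars false
variable {F4 : Type*} [Field F4] [Fintype F4]

lemma Wsum0 (hc : Fintype.card F4 = 4) {α : F4} (hα : α ^ 2 = α + 1)
    {ℓ : ℕ} (hℓ : 0 < ℓ) (wv : Fin (2 * ℓ) → F4)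
    (hv : wv ⟨1, by omega⟩ ≠ 0) :
    ∑ x : Fin (2 * ℓ) → F4, chi4 (∑ k, wv k * x k) = 0 := by
  set U : Fin ℓ → F4 := fun i => wv ⟨2 * i.val, by have := i.isLt; omega⟩ with hU
  set V : Fin ℓ → F4 := fun i => wv ⟨2 * i.val + 1, by have := i.isLt; omega⟩ with hV
  set blockfn : Fin ℓ → F4 × F4 → ℂ := fun i p => chi4 (U i * p.1 + V i * p.2) with hbf
  have step1 : ∀ y : Fin ℓ → F4 × F4,
      chi4 (∑ k, wv k * (pairFn F4 ℓ y) k) = ∏ i : Fin ℓ, blockfn i (y i) := by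
    intro y
    rw [fin_sum_pairs (fun k => wv k * (pairFn F4 ℓ y) k), chi4_finsum hc]
    apply Finset.prod_congr rfl
    intro i _
    simp only [hbf, pairFn_even, pairFn_odd, hU, hV]
  rw [← Function.Bijective.sum_comp (pairFn_bijective ℓ)
      (fun x => chi4 (∑ k, wv k * x k))]
  rw [Finset.sum_congr rfl (fun y _ => step1 y)]
  rw [← Fintype.piFinset_univ, ← Finset.prod_univ_sum (fun _ => (univ : Finset (F4 × F4))) blockfn]
  apply Finset.prod_eq_zero (Finset.mem_univ (⟨0, hℓ⟩ : Fin ℓ))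
  have hv0 : V ⟨0, hℓ⟩ = wv ⟨1, by omega⟩ := by
    simp only [hV]
  rw [hbf]
  rw [Fintype.sum_prod_type]
  have inner : ∀ a : F4, ∑ b : F4, chi4 (U ⟨0, hℓ⟩ * a + V ⟨0, hℓ⟩ * b) = 0 := by
    intro a
    have : ∀ b : F4, chi4 (U ⟨0, hℓ⟩ * a + V ⟨0, hℓ⟩ * b)
        = chi4 (U ⟨0, hℓ⟩ * a) * chi4 (V ⟨0, hℓ⟩ * b) := fun b => chi4_add hc _ _
    rw [Finset.sum_congr rfl (fun b _ => this b), ← Finset.mul_sum,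
      sum_chi4_mul hc hα, if_neg (hv0 ▸ hv), mul_zero]
  rw [Finset.sum_congr rfl (fun a _ => inner a), Finset.sum_const, smul_zero]
end W0

section AB
set_option linter.unusedSectionVars false
variable {F4 : Type*} [Field F4] [Fintype F4]

lemma sum_inv_chi4 (hc : Fintype.card F4 = 4) {α : F4} (hα : α ^ 2 = α + 1) (c : F4) :
    ∑ t ∈ univ.erase (0 : F4), chi4 (c * t⁻¹) = (if c = 0 then 4 else 0) - 1 := by
  have h1 : ∑ t ∈ univ.erase (0 : F4), chi4 (c * t⁻¹)
      = ∑ t ∈ univ.erase (0 : F4), chi4 (c * t) := by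
    apply Finset.sum_nbij' (fun t => t⁻¹) (fun t => t⁻¹)
    · intro t ht
      simp only [Finset.mem_erase, Finset.mem_univ, and_true] at *
      exact inv_ne_zero ht
    · intro t ht
      simp only [Finset.mem_erase, Finset.mem_univ, and_true] at *
      exact inv_ne_zero ht
    · intro t _; exact inv_inv t
    · intro t _; exact inv_inv t
    · intro t _; rfl
  rw [h1]
  have h2 : ∑ t : F4, chi4 (c * t) = (if c = 0 then 4 else 0) := sum_chi4_mul hc hα c
  rw [← Finset.add_sum_erase _ (fun t => chi4 (c * t)) (Finset.mem_univ (0 : F4))] at h2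
  rw [mul_zero, chi4_zero'] at h2
  linear_combination h2

lemma Asum (hc : Fintype.card F4 = 4) {α : F4} (hα : α ^ 2 = α + 1)
    {ℓ j : ℕ} (hjodd : Odd j) (hℓ : 0 < ℓ) (hjl : j ≤ ℓ)
    (w : Fin (2 * ℓ) → F4) (hw : w ⟨1, by omega⟩ ≠ 0) :
    ∑ x : Fin (2 * ℓ) → F4, (if Qform α ℓ j x = 0 then chi4 (∑ k, w k * x k) else 0)
      = -(4 : ℂ) ^ (ℓ - 1) * ((if Gval α ℓ j w = 0 then 4 else 0) - 1) := by
  have h4 : (4 : ℂ) ≠ 0 := by norm_num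
  apply mul_left_cancel₀ h4
  have key : ∀ x : Fin (2 * ℓ) → F4,
      (4 : ℂ) * (if Qform α ℓ j x = 0 then chi4 (∑ k, w k * x k) else 0)
        = ∑ t : F4, chi4 (t * Qform α ℓ j x + ∑ k, w k * x k) := by
    intro x
    have e : ∀ t : F4, chi4 (t * Qform α ℓ j x + ∑ k, w k * x k)
        = chi4 (Qform α ℓ j x * t) * chi4 (∑ k, w k * x k) := fun t => by
      rw [mul_comm (Qform α ℓ j x) t]; exact chi4_add hc _ _
    rw [Finset.sum_congr rfl (fun t _ => e t), ← Finset.sum_mul, sum_chi4_mul hc hα]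
    by_cases h : Qform α ℓ j x = 0 <;> simp [h, mul_comm]
  rw [Finset.mul_sum, Finset.sum_congr rfl (fun x _ => key x), Finset.sum_comm]
  rw [← Finset.add_sum_erase _ _ (Finset.mem_univ (0 : F4))]
  have hz : ∑ x : Fin (2 * ℓ) → F4, chi4 ((0 : F4) * Qform α ℓ j x + ∑ k, w k * x k) = 0 := by
    rw [← Wsum0 hc hα hℓ w hw]
    apply Finset.sum_congr rfl
    intro x _
    rw [zero_mul, zero_add]
  rw [hz, zero_add]
  have hW : ∀ t ∈ univ.erase (0 : F4),
      ∑ x : Fin (2 * ℓ) → F4, chi4 (t * Qform α ℓ j x + ∑ k, w k * x k)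
        = -(4 : ℂ) ^ ℓ * chi4 (Gval α ℓ j w * t⁻¹) := by
    intro t ht
    exact Wsum hc hα hjodd hjl (Finset.mem_erase.mp ht).1 w
  rw [Finset.sum_congr rfl hW, ← Finset.mul_sum, sum_inv_chi4 hc hα]
  have : (4 : ℂ) ^ ℓ = 4 * 4 ^ (ℓ - 1) := by
    rw [← pow_succ']
    congr 1
    omega
  rw [this]
  ring

lemma Gval_update (hc : Fintype.card F4 = 4) {α : F4} (hα : α ^ 2 = α + 1)
    {ℓ j : ℕ} (hℓ : 0 < ℓ) (hj : 1 ≤ j)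
    (w : Fin (2 * ℓ) → F4) (s : F4) :
    Gval α ℓ j (fun k => if k.val = 0 then w k + s else w k)
      = Gval α ℓ j w + (s ^ 2 + s * w ⟨1, by omega⟩) := by
  set ws : Fin (2 * ℓ) → F4 := fun k => if k.val = 0 then w k + s else w k with hws
  unfold Gval
  rw [← Finset.add_sum_erase _ _ (Finset.mem_univ (⟨0, hℓ⟩ : Fin ℓ)),
      ← Finset.add_sum_erase _ _ (Finset.mem_univ (⟨0, hℓ⟩ : Fin ℓ))]
  have htail : ∀ i ∈ univ.erase (⟨0, hℓ⟩ : Fin ℓ),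
      (let u := ws ⟨2 * i.val, by have := i.isLt; omega⟩
       let v := ws ⟨2 * i.val + 1, by have := i.isLt; omega⟩
       if i.val < j then u ^ 2 + u * v + α * v ^ 2 else u * v)
      = (let u := w ⟨2 * i.val, by have := i.isLt; omega⟩
         let v := w ⟨2 * i.val + 1, by have := i.isLt; omega⟩
         if i.val < j then u ^ 2 + u * v + α * v ^ 2 else u * v) := by
    intro i hi
    have hi0 : i.val ≠ 0 := fun h => (Finset.mem_erase.mp hi).1 (Fin.ext h)
    have e1 : ws ⟨2 * i.val, by have := i.isLt; omega⟩
        = w ⟨2 * i.val, by have := i.isLt; omega⟩ := by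
      simp only [hws]
      rw [if_neg (by omega)]
    have e2 : ws ⟨2 * i.val + 1, by have := i.isLt; omega⟩
        = w ⟨2 * i.val + 1, by have := i.isLt; omega⟩ := by
      simp only [hws]
      rw [if_neg (by omega)]
    simp only [e1, e2]
  rw [Finset.sum_congr rfl htail]
  have e1 : ws ⟨2 * (0:ℕ), by omega⟩ = w ⟨2 * (0:ℕ), by omega⟩ + s := by
    simp only [hws]
    simp
  have e2 : ws ⟨2 * (0:ℕ) + 1, by omega⟩ = w ⟨1, by omega⟩ := by
    simp only [hws]
    rw [if_neg (by omega)]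
  have e3 : w ⟨2 * (0:ℕ) + 1, by omega⟩ = w ⟨1, by omega⟩ := rfl
  have hhead :
      (let u := ws ⟨2 * (0:ℕ), by omega⟩
       let v := ws ⟨2 * (0:ℕ) + 1, by omega⟩
       if (0:ℕ) < j then u ^ 2 + u * v + α * v ^ 2 else u * v)
      = (let u := w ⟨2 * (0:ℕ), by omega⟩
         let v := w ⟨2 * (0:ℕ) + 1, by omega⟩
         if (0:ℕ) < j then u ^ 2 + u * v + α * v ^ 2 else u * v)
        + (s ^ 2 + s * w ⟨1, by omega⟩) := by
    simp only [e1, e2, e3, if_pos (by omega : (0:ℕ) < j)]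
    linear_combination my_sq_add hc (w ⟨2 * (0:ℕ), by omega⟩) s
  rw [hhead]
  ring

lemma Bsum (hc : Fintype.card F4 = 4) {α : F4} (hα : α ^ 2 = α + 1)
    {ℓ j : ℕ} (hjodd : Odd j) (hℓ : 0 < ℓ) (hj : 1 ≤ j) (hjl : j ≤ ℓ)
    (w : Fin (2 * ℓ) → F4) (hw : w ⟨1, by omega⟩ ≠ 0)
    (hG : Gval α ℓ j w = 0) :
    ∑ x : Fin (2 * ℓ) → F4,
        (if x ⟨0, by omega⟩ = 0 ∧ Qform α ℓ j x = 0 then chi4 (∑ k, w k * x k) else 0)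
      = -(4 : ℂ) ^ (ℓ - 1) := by
  have h16 : (16 : ℂ) ≠ 0 := by norm_num
  apply mul_left_cancel₀ h16
  set v := w ⟨1, by omega⟩ with hv
  set ws : F4 → Fin (2 * ℓ) → F4 := fun s k => if k.val = 0 then w k + s else w k with hws
  have key : ∀ x : Fin (2 * ℓ) → F4,
      (16 : ℂ) * (if x ⟨0, by omega⟩ = 0 ∧ Qform α ℓ j x = 0 then chi4 (∑ k, w k * x k) else 0)
        = ∑ s : F4, ∑ t : F4, chi4 (t * Qform α ℓ j x + ∑ k, ws s k * x k) := by
    intro x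
    have hsplit : ∀ s t : F4, chi4 (t * Qform α ℓ j x + ∑ k, ws s k * x k)
        = chi4 (Qform α ℓ j x * t) * (chi4 (x ⟨0, by omega⟩ * s)
            * chi4 (∑ k, w k * x k)) := by
      intro s t
      have hlin : (∑ k, ws s k * x k) = x ⟨0, by omega⟩ * s + ∑ k, w k * x k := by
        have : ∀ k : Fin (2 * ℓ), ws s k * x k
            = w k * x k + (if k = ⟨0, by omega⟩ then s * x k else 0) := by
          intro k
          simp only [hws]
          by_cases h : k.val = 0
          · rw [if_pos h, if_pos (Fin.ext h)]; ring
          · rw [if_neg h, if_neg (fun hh => h (by rw [hh]))]; ring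
        rw [Finset.sum_congr rfl (fun k _ => this k), Finset.sum_add_distrib,
          Finset.sum_ite_eq' univ (⟨0, by omega⟩ : Fin (2 * ℓ)) (fun k => s * x k)]
        simp only [Finset.mem_univ, if_true]
        ring
      rw [hlin, ← chi4_add hc, ← chi4_add hc]
      congr 1
      ring
    rw [Finset.sum_congr rfl (fun s _ => Finset.sum_congr rfl (fun t _ => hsplit s t))]
    have inner : ∀ s : F4, ∑ t : F4, chi4 (Qform α ℓ j x * t) * (chi4 (x ⟨0, by omega⟩ * s)
            * chi4 (∑ k, w k * x k))
        = (if Qform α ℓ j x = 0 then 4 else 0) * (chi4 (x ⟨0, by omega⟩ * s)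
            * chi4 (∑ k, w k * x k)) := by
      intro s
      rw [← Finset.sum_mul, sum_chi4_mul hc hα]
    rw [Finset.sum_congr rfl (fun s _ => inner s), ← Finset.mul_sum, ← Finset.sum_mul,
      sum_chi4_mul hc hα]
    by_cases h1 : x ⟨0, by omega⟩ = 0 <;> by_cases h2 : Qform α ℓ j x = 0 <;>
      simp [h1, h2] <;> ring
  rw [Finset.mul_sum, Finset.sum_congr rfl (fun x _ => key x), Finset.sum_comm]
  have outer : ∀ s : F4,
      ∑ x : Fin (2 * ℓ) → F4, ∑ t : F4, chi4 (t * Qform α ℓ j x + ∑ k, ws s k * x k)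
        = -(4:ℂ) ^ ℓ * ((if s ^ 2 + s * v = 0 then 4 else 0) - 1) := by
    intro s
    rw [Finset.sum_comm]
    have hws1 : ws s ⟨1, by omega⟩ = v := by
      simp only [hws, hv]
      rw [if_neg (by omega)]
    rw [← Finset.add_sum_erase _ _ (Finset.mem_univ (0 : F4))]
    have hz : ∑ x : Fin (2 * ℓ) → F4, chi4 ((0:F4) * Qform α ℓ j x + ∑ k, ws s k * x k) = 0 := by
      rw [← Wsum0 hc hα hℓ (ws s) (hws1.symm ▸ hw)]
      apply Finset.sum_congr rfl
      intro x _
      rw [zero_mul, zero_add]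
    rw [hz, zero_add]
    have hWg : ∀ t ∈ univ.erase (0:F4),
        ∑ x : Fin (2 * ℓ) → F4, chi4 (t * Qform α ℓ j x + ∑ k, ws s k * x k)
          = -(4:ℂ) ^ ℓ * chi4 ((s ^ 2 + s * v) * t⁻¹) := by
      intro t ht
      rw [Wsum hc hα hjodd hjl (Finset.mem_erase.mp ht).1 (ws s)]
      congr 2
      have := Gval_update hc hα hℓ hj w s
      simp only [hws]
      rw [this, hG, zero_add, hv]
    rw [Finset.sum_congr rfl hWg, ← Finset.mul_sum, sum_inv_chi4 hc hα]
  rw [Finset.sum_congr rfl (fun s _ => outer s), ← Finset.mul_sum]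
  have hcount : ∑ s : F4, (((if s ^ 2 + s * v = 0 then (4:ℂ) else 0)) - 1) = 4 := by
    rw [Finset.sum_sub_distrib, Finset.sum_const, Finset.card_univ, hc]
    have hcond : ∀ s : F4, (s ^ 2 + s * v = 0) ↔ s ∈ ({0, v} : Finset F4) := by
      intro s
      simp only [Finset.mem_insert, Finset.mem_singleton]
      constructor
      · intro h
        have : s * (s + v) = 0 := by linear_combination h
        rcases mul_eq_zero.mp this with h' | h'
        · exact Or.inl h'
        · exact Or.inr (by linear_combination h' - v * my_two hc)
      · rintro (rfl | rfl)
        · ring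
        · linear_combination (v^2) * my_two hc
    have : ∑ s : F4, (if s ^ 2 + s * v = 0 then (4:ℂ) else 0)
        = ∑ s : F4, (if s ∈ ({0, v} : Finset F4) then (4:ℂ) else 0) := by
      apply Finset.sum_congr rfl
      intro s _
      simp only [hcond s]
    rw [this, Finset.sum_ite_mem, Finset.univ_inter, Finset.sum_const]
    rw [Finset.card_insert_of_notMem (by simp [hw]; exact fun h => hw h.symm), Finset.card_singleton]
    norm_num
  rw [hcount]
  have h4p : (4:ℂ) ^ ℓ = 4 * 4 ^ (ℓ - 1) := by
    rw [← pow_succ']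
    congr 1
    omega
  rw [h4p]
  ring

lemma Qform_zero {α : F4} (ℓ j : ℕ) : Qform α ℓ j (0 : Fin (2*ℓ) → F4) = 0 := by
  unfold Qform
  apply Finset.sum_eq_zero
  intro i _
  simp
end AB

section Glue
set_option linter.unusedSectionVars false
variable {F4 : Type*} [Field F4] [Fintype F4]

lemma chiSum_eq_sum {m : ℕ} (w : Fin m → F4) (S : Set (Fin m → F4)) :
    chiSum w S = ∑ x ∈ (Set.toFinite S).toFinset, chi4 (∑ i, w i * x i) := by
  rw [chiSum, ← finsum_mem_coe_finset, Set.Finite.coe_toFinset]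
end Glue


theorem stmt14 (F4 : Type*) [Field F4] [Fintype F4] (hc : Fintype.card F4 = 4)
    (α : F4) (hα : α ^ 2 = α + 1)
    (ℓ j : ℕ) (hℓ : 2 ≤ ℓ) (hjodd : Odd j) (hj : 1 ≤ j) (hjl : j ≤ ℓ)
    (Z : Set (Fin (2 * ℓ) → F4)) (hZ : Z = {x | x ≠ 0 ∧ Qform α ℓ j x = 0})
    (O₀ : Set (Fin (2 * ℓ) → F4)) (hO₀ : O₀ = {x ∈ Z | x ⟨0, by omega⟩ = 0})
    (w : Fin (2 * ℓ) → F4) (hw : w ⟨1, by omega⟩ ≠ 0)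
    (hval : chiSum w O₀ = -1 + 4 ^ (ℓ - 1)) :
    chiSum w (Z \ O₀) = 0 := by
  classical
  have hℓ0 : 0 < ℓ := by omega
  subst hZ
  subst hO₀
  set f : (Fin (2 * ℓ) → F4) → ℂ := fun x => chi4 (∑ i, w i * x i) with hf
  have hf0 : f 0 = 1 := by
    simp only [hf, Pi.zero_apply, mul_zero, Finset.sum_const_zero]
    exact chi4_zero'
  set ZF : Finset (Fin (2 * ℓ) → F4) :=
    univ.filter (fun x => x ≠ 0 ∧ Qform α ℓ j x = 0) with hZF
  set OF : Finset (Fin (2 * ℓ) → F4) :=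
    univ.filter (fun x => (x ≠ 0 ∧ Qform α ℓ j x = 0) ∧ x ⟨0, by omega⟩ = 0) with hOF
  have hZs : chiSum w {x | x ≠ 0 ∧ Qform α ℓ j x = 0} = ∑ x ∈ ZF, f x := by
    rw [chiSum_eq_sum]
    apply Finset.sum_congr
    · ext x
      simp [hZF, Set.Finite.mem_toFinset]
    · intro x _; rfl
  have hOs : chiSum w {x ∈ {x | x ≠ 0 ∧ Qform α ℓ j x = 0} | x ⟨0, by omega⟩ = 0}
      = ∑ x ∈ OF, f x := by
    rw [chiSum_eq_sum]
    apply Finset.sum_congr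
    · ext x
      simp only [Set.Finite.mem_toFinset, Set.mem_sep_iff, Set.mem_setOf_eq, hOF,
        Finset.mem_filter, Finset.mem_univ, true_and]
    · intro x _; rfl
  have hDs : chiSum w ({x | x ≠ 0 ∧ Qform α ℓ j x = 0}
        \ {x ∈ {x | x ≠ 0 ∧ Qform α ℓ j x = 0} | x ⟨0, by omega⟩ = 0})
      = ∑ x ∈ ZF \ OF, f x := by
    rw [chiSum_eq_sum]
    apply Finset.sum_congr
    · ext x
      simp only [Set.Finite.mem_toFinset, Set.mem_diff, Set.mem_sep_iff, Set.mem_setOf_eq,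
        Finset.mem_sdiff, hZF, hOF, Finset.mem_filter, Finset.mem_univ, true_and]
    · intro x _; rfl
  -- A identity
  have hQ0 := Qform_zero (F4 := F4) (α := α) ℓ j
  have hfilterA : univ.filter (fun x : Fin (2 * ℓ) → F4 => Qform α ℓ j x = 0)
      = insert 0 ZF := by
    ext x
    simp only [Finset.mem_filter, Finset.mem_univ, true_and, Finset.mem_insert, hZF]
    by_cases hx : x = 0
    · simp [hx, hQ0]
    · simp [hx]
  have h0Z : (0 : Fin (2 * ℓ) → F4) ∉ ZF := by simp [hZF]
  have hA : ∑ x : Fin (2 * ℓ) → F4, (if Qform α ℓ j x = 0 then f x else 0)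
      = (∑ x ∈ ZF, f x) + 1 := by
    rw [← Finset.sum_filter, hfilterA, Finset.sum_insert h0Z, hf0]
    ring
  -- B identity
  have hfilterB : univ.filter (fun x : Fin (2 * ℓ) → F4 =>
        x ⟨0, by omega⟩ = 0 ∧ Qform α ℓ j x = 0) = insert 0 OF := by
    ext x
    simp only [Finset.mem_filter, Finset.mem_univ, true_and, Finset.mem_insert, hOF]
    by_cases hx : x = 0
    · simp [hx, hQ0]
    · simp [hx]
      tauto
  have h0O : (0 : Fin (2 * ℓ) → F4) ∉ OF := by simp [hOF]
  have hB : ∑ x : Fin (2 * ℓ) → F4,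
        (if x ⟨0, by omega⟩ = 0 ∧ Qform α ℓ j x = 0 then f x else 0)
      = (∑ x ∈ OF, f x) + 1 := by
    rw [← Finset.sum_filter, hfilterB, Finset.sum_insert h0O, hf0]
    ring
  -- G nonzero
  have hOval : (∑ x ∈ OF, f x) = -1 + 4 ^ (ℓ - 1) := by rw [← hOs]; exact hval
  have hGne : Gval α ℓ j w ≠ 0 := by
    intro hG
    have hBv := Bsum hc hα hjodd hℓ0 hj hjl w hw hG
    rw [hB, hOval] at hBv
    have hpow : (4:ℂ) ^ (ℓ - 1) ≠ 0 := pow_ne_zero _ (by norm_num)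
    apply hpow
    have h20 : (2:ℂ) * 4 ^ (ℓ - 1) = 0 := by linear_combination hBv
    have h2 : (2:ℂ) ≠ 0 := by norm_num
    exact (mul_eq_zero.mp h20).resolve_left h2
  -- A value
  have hAv := Asum hc hα hjodd hℓ0 hjl w hw
  rw [if_neg hGne, hA] at hAv
  -- conclude
  have hsub : (∑ x ∈ ZF \ OF, f x) = (∑ x ∈ ZF, f x) - (∑ x ∈ OF, f x) := by
    have hsubset : OF ⊆ ZF := by
      intro x hx
      simp only [hOF, hZF, Finset.mem_filter] at *
      tauto
    rw [eq_sub_iff_add_eq, Finset.sum_sdiff hsubset]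
  rw [hDs, hsub, hOval]
  have : (∑ x ∈ ZF, f x) = -1 + 4 ^ (ℓ - 1) := by linear_combination hAv
  rw [this]
  ring
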